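/- Let k be a field, α ∈ k nonzero, A = A_α the Gasharov–Peeva algebra, and let N be a finitely generated A-module. For each integer i, let Ω_i be the 2e×2e matrix over k (e = dim_k N) given in block form by [[χ₁, αⁱχ₃],[χ₄, χ₂]], where χ_j is the matrix of multiplication by x_j on N with respect to a fixed k-basis. Let r = max_i rank Ω_i and c(N) = dim_k N − dim_k Socle(N). If α has infinite order in k^×, then rank Ω_i < r for at most c(N) values of i ∈ ℤ. -/

import Mathlib

set_option synthInstance.maxHeartbeats 1000000
set_option maxHeartbeats 2000000

open MvPolynomial in
/-- The Gasharov–Peeva ideal `I_α ⊆ k[X₁,…,X₅]` (variables indexed `0,…,4`). -/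
noncomputable def gpIdeal (k : Type) [Field k] (α : k) : Ideal (MvPolynomial (Fin 5) k) :=
  Ideal.span {C α * X 0 * X 2 + X 1 * X 2,
    X 0 * X 3 + X 1 * X 3,
    X 2 ^ 2 + C α * X 0 * X 4 - X 1 * X 4,
    X 3 ^ 2 + X 0 * X 4 - X 1 * X 4,
    X 0 ^ 2, X 1 ^ 2, X 2 * X 3, X 2 * X 4, X 3 * X 4, X 4 ^ 2}

/-- The Gasharov–Peeva algebra `A = A_α = k[X₁,…,X₅]/I_α`. -/
noncomputable abbrev GP (k : Type) [Field k] (α : k) : Type :=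
  MvPolynomial (Fin 5) k ⧸ gpIdeal k α

/-- `x i` : the residue class of the variable `X i` in `A_α` (so `x₁ = gpx α 0`, …,
`x₅ = gpx α 4`). -/
noncomputable def gpx {k : Type} [Field k] (α : k) (i : Fin 5) : GP k α :=
  Ideal.Quotient.mk _ (MvPolynomial.X i)

/-- The maximal ideal `m = (x₁,…,x₅)` of `A_α`. -/
noncomputable abbrev gpm (k : Type) [Field k] (α : k) : Ideal (GP k α) :=
  Ideal.span {gpx α 0, gpx α 1, gpx α 2, gpx α 3, gpx α 4}


open Matrix Polynomial

/-- Any submatrix has rank at most the rank of the original matrix. -/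
lemma aux_rank_submatrix_le {K : Type*} [Field K] {ι κ ι' κ' : Type*} [Fintype ι] [Fintype κ]
    [Fintype ι'] [Fintype κ'] [DecidableEq ι] [DecidableEq κ]
    (A : Matrix ι κ K) (f : ι' → ι) (g : κ' → κ) :
    (A.submatrix f g).rank ≤ A.rank := by
  have h1 : A.submatrix f g =
      (1 : Matrix ι ι K).submatrix f id * A * (1 : Matrix κ κ K).submatrix id g := by
    ext i j
    simp [Matrix.mul_apply, Matrix.one_apply, Finset.sum_ite_eq, Finset.sum_ite_eq']
  rw [h1]
  exact le_trans (Matrix.rank_mul_le_left _ _) (Matrix.rank_mul_le_right _ _)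

/-- One can select `rank` many linearly independent columns. -/
lemma aux_exists_cols {K : Type*} [Field K] {ι κ : Type*} [Fintype ι] [Fintype κ]
    (M : Matrix ι κ K) {p : ℕ} (h : M.rank = p) :
    ∃ g : Fin p → κ, Function.Injective g ∧ LinearIndependent K (fun j => Mᵀ (g j)) := by
  classical
  obtain ⟨s, hs_sub, hspan, hli⟩ := exists_linearIndependent K (Set.range Mᵀ)
  have hfin : s.Finite := (Set.finite_range Mᵀ).subset hs_sub
  haveI := hfin.fintype
  have hcard : s.toFinset.card = p := by
    rw [← finrank_span_set_eq_card hli, hspan]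
    exact (Matrix.rank_eq_finrank_span_cols M).symm.trans h
  have hc2 : Fintype.card s = p := by rwa [Set.toFinset_card] at hcard
  let t := (Fintype.equivFinOfCardEq hc2).symm
  choose gg hgg using fun v : s => hs_sub v.2
  refine ⟨fun j => gg (t j), ?_, ?_⟩
  · intro a b hab
    apply t.injective
    apply Subtype.ext
    simp only at hab
    rw [← hgg (t a), ← hgg (t b), hab]
  · have hEq : (fun j => Mᵀ (gg (t j))) = (fun v : s => (v : ι → K)) ∘ t := by
      funext j; simp [Function.comp, hgg]
    rw [hEq]
    exact hli.comp t t.injective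

/-- A matrix of rank `p` has a nonzero `p × p` minor. -/
lemma aux_exists_minor {K : Type*} [Field K] {ι κ : Type*} [Fintype ι] [Fintype κ]
    [DecidableEq ι] [DecidableEq κ]
    (A : Matrix ι κ K) {p : ℕ} (h : A.rank = p) :
    ∃ f : Fin p → ι, ∃ g : Fin p → κ, Function.Injective f ∧ Function.Injective g ∧
      (A.submatrix f g).det ≠ 0 := by
  obtain ⟨g, hg, hli⟩ := aux_exists_cols A h
  have hBt : (A.submatrix id g)ᵀ.rank = p := by
    have hli' : LinearIndependent K (fun j => (A.submatrix id g)ᵀ j) := hli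
    rw [LinearIndependent.rank_matrix (M := (A.submatrix id g)ᵀ) hli', Fintype.card_fin]
  obtain ⟨f, hf, hli2⟩ := aux_exists_cols (A.submatrix id g)ᵀ hBt
  refine ⟨f, g, hf, hg, ?_⟩
  have hrows : LinearIndependent K (fun i => (A.submatrix f g) i) := hli2
  have hunit : IsUnit (A.submatrix f g) := Matrix.linearIndependent_rows_iff_isUnit.mp hrows
  have := (Matrix.isUnit_iff_isUnit_det _).mp hunit
  exact this.ne_zero

/-- Degree bound on determinants of polynomial matrices, columnwise. -/
lemma aux_natDegree_det_le {K : Type*} [Field K] {κ : Type*} [Fintype κ] [DecidableEq κ]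
    (M : Matrix κ κ K[X]) (d : κ → ℕ) (h : ∀ i j, (M i j).natDegree ≤ d j) :
    M.det.natDegree ≤ ∑ j, d j := by
  rw [Matrix.det_apply']
  refine Polynomial.natDegree_sum_le_of_forall_le _ _ fun σ _ => ?_
  refine le_trans (Polynomial.natDegree_mul_le) ?_
  have h1 : (Polynomial.natDegree ((Equiv.Perm.sign σ : ℤ) : K[X])) = 0 :=
    Polynomial.natDegree_intCast _
  rw [h1, zero_add]
  refine le_trans (Polynomial.natDegree_prod_le _ _) ?_
  exact Finset.sum_le_sum fun i _ => h (σ i) i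

/-- Let `N` be a finitely generated `A_α`-module with `k`-basis `b` (of size `e`), let
`χ j` be the matrix of multiplication by `x_{j+1}` on `N`, and let
`Ω i = [[χ₁, αⁱχ₃],[χ₄, χ₂]]` (a `2e × 2e` matrix over `k`). If `α` has infinite order
and `r = max_i rank Ω_i`, then `rank Ω_i < r` for at most `c(N) = dim_k N − dim_k Socle N`
values of `i ∈ ℤ`. -/
theorem stmt18 (k : Type) [Field k] (α : k) (hα : α ≠ 0)
    (hord : ∀ n : ℕ, 0 < n → α ^ n ≠ 1)
    (N : Type) [AddCommGroup N] [Module (GP k α) N] [Module.Finite (GP k α) N]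
    (e : ℕ) (b : Module.Basis (Fin e) k (RestrictScalars k (GP k α) N))
    (χ : Fin 5 → Matrix (Fin e) (Fin e) k)
    (hχ : ∀ j : Fin 5, ∀ v : RestrictScalars k (GP k α) N,
      RestrictScalars.addEquiv k (GP k α) N ((Matrix.toLin b b (χ j)) v) =
        gpx α j • RestrictScalars.addEquiv k (GP k α) N v)
    (Ω : ℤ → Matrix (Fin e ⊕ Fin e) (Fin e ⊕ Fin e) k)
    (hΩ : ∀ i : ℤ, Ω i = Matrix.fromBlocks (χ 0) ((α ^ i) • χ 2) (χ 3) (χ 1))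
    (r : ℕ) (hr : r = ⨆ i : ℤ, (Ω i).rank)
    (c : ℕ)
    (hc : c = Module.finrank k (RestrictScalars k (GP k α) N) -
      Module.finrank k (RestrictScalars k (GP k α)
        (Submodule.torsionBySet (GP k α) N ((gpm k α : Ideal (GP k α)) : Set (GP k α))))) :
    {i : ℤ | (Ω i).rank < r}.Finite ∧ Nat.card {i : ℤ | (Ω i).rank < r} ≤ c := by
  classical
  -- the supremum is attained
  have hbdd : BddAbove (Set.range fun i : ℤ => (Ω i).rank) := by
    refine ⟨Fintype.card (Fin e ⊕ Fin e), ?_⟩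
    rintro x ⟨i, rfl⟩
    exact Matrix.rank_le_card_width _
  have hle : ∀ i : ℤ, (Ω i).rank ≤ r := by
    intro i; rw [hr]; exact le_ciSup hbdd i
  obtain ⟨i₀, hi₀⟩ : ∃ i₀ : ℤ, (Ω i₀).rank = r := by
    have := Nat.sSup_mem (s := Set.range fun i : ℤ => (Ω i).rank) ⟨(Ω 0).rank, ⟨0, rfl⟩⟩ hbdd
    obtain ⟨i₀, h⟩ := this
    exact ⟨i₀, by rw [hr]; exact h⟩
  -- multiplication by x₃ map
  set φ : (Fin e → k) →ₗ[k] (Fin e → k) := (χ 2).mulVecLin with hφdef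
  set Kk : Submodule k (Fin e → k) := LinearMap.ker φ with hKkdef
  -- key identity relating toLin and mulVec
  have hkey : ∀ M : Matrix (Fin e) (Fin e) k, ∀ v : RestrictScalars k (GP k α) N,
      b.equivFun ((Matrix.toLin b b M) v) = M.mulVec (b.equivFun v) := by
    intro M v
    rw [Matrix.toLin_apply, ← Module.Basis.equivFun_symm_apply, LinearEquiv.apply_symm_apply,
      Module.Basis.equivFun_apply]
  -- the socle embeds into the kernel of φ
  set S := Submodule.torsionBySet (GP k α) N ((gpm k α : Ideal (GP k α)) : Set (GP k α)) with hSdef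
  have hx2m : gpx α 2 ∈ ((gpm k α : Ideal (GP k α)) : Set (GP k α)) := by
    apply Ideal.subset_span
    simp
  have hsoc : Module.finrank k (RestrictScalars k (GP k α) S) ≤ Module.finrank k Kk := by
    let F : RestrictScalars k (GP k α) S →ₗ[k] (Fin e → k) :=
      { toFun := fun w => b.equivFun ((RestrictScalars.addEquiv k (GP k α) N).symm
          ((RestrictScalars.addEquiv k (GP k α) S w : S) : N))
        map_add' := by intros; simp
        map_smul' := by
          intro cc w
          simp [RestrictScalars.addEquiv_map_smul,
            RestrictScalars.addEquiv_symm_map_algebraMap_smul] }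
    have hFK : ∀ w, F w ∈ Kk := by
      intro w
      have h0 : gpx α 2 • ((RestrictScalars.addEquiv k (GP k α) S w : S) : N) = 0 := by
        have := (RestrictScalars.addEquiv k (GP k α) S w : S).2
        exact (Submodule.mem_torsionBySet_iff _ _).mp this ⟨_, hx2m⟩
      set v : RestrictScalars k (GP k α) N := (RestrictScalars.addEquiv k (GP k α) N).symm
          ((RestrictScalars.addEquiv k (GP k α) S w : S) : N) with hv
      have h1 : RestrictScalars.addEquiv k (GP k α) N ((Matrix.toLin b b (χ 2)) v) = 0 := by
        rw [hχ 2 v, hv, AddEquiv.apply_symm_apply]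
        exact h0
      have h2 : (Matrix.toLin b b (χ 2)) v = 0 := by
        apply (RestrictScalars.addEquiv k (GP k α) N).injective
        rw [h1, map_zero]
      have h3 : (χ 2).mulVec (b.equivFun v) = 0 := by
        rw [← hkey, h2, map_zero]
      exact h3
    have hFinj : Function.Injective F := by
      intro w1 w2 h12
      have := b.equivFun.injective h12
      have := (RestrictScalars.addEquiv k (GP k α) N).symm.injective this
      have := Subtype.ext (α := N) this
      exact (RestrictScalars.addEquiv k (GP k α) S).injective this
    have hinj2 : Function.Injective (F.codRestrict Kk hFK) := by
      intro w1 w2 h12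
      apply hFinj
      have := congrArg (Submodule.subtype Kk) h12
      simpa using this
    exact LinearMap.finrank_le_finrank_of_injective hinj2
  -- complement of the kernel
  obtain ⟨W, hW⟩ := Submodule.exists_isCompl Kk
  set m₁ := Module.finrank k W with hm₁
  set n₁ := Module.finrank k Kk with hn₁
  have hme : m₁ + n₁ = e := by
    have h1 := Submodule.finrank_add_eq_of_isCompl hW.symm
    rwa [Module.finrank_fintype_fun_eq_card, Fintype.card_fin] at h1
  have he' : Module.finrank k (RestrictScalars k (GP k α) N) = e := by
    rw [Module.finrank_eq_card_basis b, Fintype.card_fin]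
  have hm₁c : m₁ ≤ c := by
    rw [hc, he']
    omega
  -- adapted basis
  set eqv : (Fin m₁ ⊕ Fin n₁) ≃ Fin e := finSumFinEquiv.trans (finCongr hme) with heqv
  set u : Module.Basis (Fin e) k (Fin e → k) :=
    (((Module.finBasis k W).prod (Module.finBasis k Kk)).map
      (Submodule.prodEquivOfIsCompl W Kk hW.symm)).reindex eqv with hu
  have huK : ∀ i : Fin n₁, u (eqv (Sum.inr i)) ∈ Kk := by
    intro i
    rw [hu, Module.Basis.reindex_apply, Equiv.symm_apply_apply, Module.Basis.map_apply, Module.Basis.prod_apply]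
    simp [Submodule.coe_prodEquivOfIsCompl]
  set Q : Matrix (Fin e) (Fin e) k := Matrix.of fun i j => (u j) i with hQ
  have hdetQ : IsUnit Q.det := by
    apply (Matrix.isUnit_iff_isUnit_det _).mp
    apply Matrix.linearIndependent_cols_iff_isUnit.mp
    have : (fun j => Qᵀ j) = fun j => u j := rfl
    rw [Matrix.col_def, this]
    exact u.linearIndependent
  set T : Finset (Fin e) := Finset.image (fun i : Fin n₁ => eqv (Sum.inr i)) Finset.univ with hT
  have hTcard : T.card = n₁ := by
    have hinj : Function.Injective (fun i : Fin n₁ => eqv (Sum.inr i)) :=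
      fun a b hab => Sum.inr_injective (eqv.injective hab)
    rw [hT, Finset.card_image_of_injective _ hinj, Finset.card_univ, Fintype.card_fin]
  have hTcol : ∀ j ∈ T, ∀ i, (χ 2 * Q) i j = 0 := by
    intro j hj i
    rw [hT, Finset.mem_image] at hj
    obtain ⟨i₂, -, rfl⟩ := hj
    have hk : (χ 2).mulVec (u (eqv (Sum.inr i₂))) = 0 := huK i₂
    have : (χ 2 * Q) i (eqv (Sum.inr i₂)) = ((χ 2).mulVec (u (eqv (Sum.inr i₂)))) i := by
      simp [Matrix.mul_apply, Matrix.mulVec, dotProduct, hQ]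
    rw [this, hk]
    rfl
  -- block diagonal change of basis
  set D : Matrix (Fin e ⊕ Fin e) (Fin e ⊕ Fin e) k := Matrix.fromBlocks 1 0 0 Q with hD
  have hdetD : IsUnit D.det := by
    rw [hD, Matrix.det_fromBlocks_zero₂₁, Matrix.det_one, one_mul]
    exact hdetQ
  have hrD : ∀ i : ℤ, (Ω i * D).rank = (Ω i).rank := fun i =>
    Matrix.rank_mul_eq_left_of_isUnit_det D (Ω i) hdetD
  -- choose a nonzero r × r minor at i₀
  obtain ⟨f, g, hfinj, hginj, hdet⟩ := aux_exists_minor (Ω i₀ * D) (by rw [hrD, hi₀])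
  -- the polynomial matrix
  set MP : Matrix (Fin e ⊕ Fin e) (Fin e ⊕ Fin e) k[X] :=
    Matrix.fromBlocks ((χ 0).map Polynomial.C)
      (((Polynomial.X : k[X])) • ((χ 2 * Q).map Polynomial.C))
      ((χ 3).map Polynomial.C) ((χ 1 * Q).map Polynomial.C) with hMP
  have hMPeval : ∀ y : k, MP.map (Polynomial.eval y) =
      (Matrix.fromBlocks (χ 0) (y • χ 2) (χ 3) (χ 1)) * D := by
    intro y
    have h2 : (Matrix.fromBlocks (χ 0) (y • χ 2) (χ 3) (χ 1)) * D =
        Matrix.fromBlocks (χ 0) (y • (χ 2 * Q)) (χ 3) (χ 1 * Q) := by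
      rw [hD, Matrix.fromBlocks_multiply]
      simp [smul_mul_assoc]
    rw [h2, hMP]
    ext i j
    rcases i with i | i <;> rcases j with j | j <;>
      simp [Matrix.map_apply, Matrix.smul_apply, Matrix.fromBlocks_apply₁₁,
        Matrix.fromBlocks_apply₁₂, Matrix.fromBlocks_apply₂₁, Matrix.fromBlocks_apply₂₂,
        Matrix.mul_apply, Polynomial.eval_finset_sum]
  set P : k[X] := ((MP.submatrix f g)).det with hPdef
  have heval : ∀ y : k, P.eval y =
      (((Matrix.fromBlocks (χ 0) (y • χ 2) (χ 3) (χ 1)) * D).submatrix f g).det := by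
    intro y
    rw [hPdef, ← Polynomial.coe_evalRingHom, RingHom.map_det, RingHom.mapMatrix_apply,
      Polynomial.coe_evalRingHom, ← Matrix.submatrix_map, hMPeval]
  have hP0 : P ≠ 0 := by
    intro h0
    apply hdet
    have := heval (α ^ i₀)
    rw [h0] at this
    rw [hΩ i₀]
    rw [← this, Polynomial.eval_zero]
  -- degree bound
  set badC : Finset (Fin e ⊕ Fin e) := Finset.image Sum.inr Tᶜ with hbadC
  have hbadCard : badC.card = m₁ := by
    rw [hbadC, Finset.card_image_of_injective _ Sum.inr_injective, Finset.card_compl,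
      Fintype.card_fin, hTcard]
    omega
  set dd : (Fin e ⊕ Fin e) → ℕ := fun x => if x ∈ badC then 1 else 0 with hdd
  have hbadmem : ∀ j : Fin e, (Sum.inr j : Fin e ⊕ Fin e) ∈ badC ↔ j ∉ T := by
    intro j
    rw [hbadC]
    simp [Finset.mem_image]
  have hEnt : ∀ x y, (MP x y).natDegree ≤ dd y := by
    intro x y
    rcases x with i | i <;> rcases y with j | j
    · have hval : MP (Sum.inl i) (Sum.inl j) = Polynomial.C ((χ 0) i j) := rfl
      simp [hval]
    · have hval : MP (Sum.inl i) (Sum.inr j) = Polynomial.X * Polynomial.C ((χ 2 * Q) i j) := rfl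
      by_cases hjT : j ∈ T
      · rw [hval, hTcol j hjT i]
        simp
      · have hmem : (Sum.inr j : Fin e ⊕ Fin e) ∈ badC := (hbadmem j).mpr hjT
        have h1 : (Polynomial.X * Polynomial.C ((χ 2 * Q) i j)).natDegree ≤ 1 := by
          refine le_trans Polynomial.natDegree_mul_le ?_
          simp
        rw [hval]
        simpa [hdd, hmem] using h1
    · have hval : MP (Sum.inr i) (Sum.inl j) = Polynomial.C ((χ 3) i j) := rfl
      simp [hval]
    · have hval : MP (Sum.inr i) (Sum.inr j) = Polynomial.C ((χ 1 * Q) i j) := rfl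
      simp [hval]
  have hdeg : P.natDegree ≤ m₁ := by
    have h1 : P.natDegree ≤ ∑ j : Fin r, dd (g j) :=
      aux_natDegree_det_le _ (fun j => dd (g j)) (fun i j => hEnt (f i) (g j))
    refine h1.trans ?_
    have h2 : ∑ j : Fin r, dd (g j) =
        (Finset.univ.filter fun j : Fin r => g j ∈ badC).card := by
      rw [Finset.card_filter]
    rw [h2, ← hbadCard]
    apply Finset.card_le_card_of_injOn g
    · intro j hj
      exact (Finset.mem_filter.mp hj).2
    · exact Set.injOn_of_injective hginj
  -- every rank-drop is a root
  have hroot : ∀ i : ℤ, (Ω i).rank < r → P.eval (α ^ i) = 0 := by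
    intro i hlt
    by_contra h0
    have hdne : (((Ω i) * D).submatrix f g).det ≠ 0 := by
      rw [hΩ i]
      rw [heval (α ^ i)] at h0
      exact h0
    have hrk : ((((Ω i) * D)).submatrix f g).rank = r := by
      rw [Matrix.rank_of_isUnit _ ((Matrix.isUnit_iff_isUnit_det _).mpr
        (isUnit_iff_ne_zero.mpr hdne)), Fintype.card_fin]
    have := aux_rank_submatrix_le ((Ω i) * D) f g
    rw [hrk, hrD i] at this
    omega
  -- injectivity of i ↦ α ^ i
  have key : ∀ i j : ℤ, i < j → α ^ i ≠ α ^ j := by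
    intro i j hij hEq
    have h3 : α ^ i ≠ 0 := zpow_ne_zero _ hα
    have h1 : α ^ (j - i) = 1 := by
      have h2 : α ^ j = α ^ i * α ^ (j - i) := by
        rw [← zpow_add₀ hα]; ring_nf
      rw [← hEq] at h2
      exact (mul_left_cancel₀ h3 (by rw [← h2, mul_one])).symm
    set n := (j - i).toNat with hn
    have hn0 : 0 < n := by omega
    apply hord n hn0
    have h4 : α ^ ((n : ℤ)) = 1 := by rw [show ((n:ℤ)) = j - i by omega]; exact h1
    rwa [zpow_natCast] at h4
  have hzinj : Function.Injective (fun i : ℤ => α ^ i) := by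
    intro i j hEq
    by_contra hne
    rcases Ne.lt_or_gt hne with h | h
    · exact key i j h hEq
    · exact key j i h hEq.symm
  have hrootsfin : {x : k | P.IsRoot x}.Finite := Polynomial.finite_setOf_isRoot hP0
  have hsub : {i : ℤ | (Ω i).rank < r} ⊆ (fun i : ℤ => α ^ i) ⁻¹' {x | P.IsRoot x} :=
    fun i hi => hroot i hi
  have hfin : {i : ℤ | (Ω i).rank < r}.Finite :=
    Set.Finite.subset (hrootsfin.preimage hzinj.injOn) hsub
  refine ⟨hfin, ?_⟩
  rw [Nat.card_coe_set_eq]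
  have h1 : ({i : ℤ | (Ω i).rank < r}).ncard ≤ {x : k | P.IsRoot x}.ncard := by
    rw [← Set.ncard_image_of_injective _ hzinj]
    refine Set.ncard_le_ncard ?_ hrootsfin
    rintro x ⟨i, hi, rfl⟩
    exact hroot i hi
  have h2 : {x : k | P.IsRoot x}.ncard ≤ P.natDegree := by
    have hset : {x : k | P.IsRoot x} = ↑P.roots.toFinset := by
      ext x
      simp [Polynomial.mem_roots, hP0, Polynomial.IsRoot]
    rw [hset, Set.ncard_coe_finset]
    exact (P.roots.toFinset_card_le).trans P.card_roots'
  omega
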